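/- Consider the system of three quaternion matrix equations A_i X_i + Y_i B_i + C_i Z_i D_i + F_i Z_{i+1} G_i = E_i (i = 1, 2, 3) in the unknowns X₁, X₂, X₃, Y₁, Y₂, Y₃, Z₁, Z₂, Z₃, Z₄, where A_i ∈ ℍ^{m×k_i}, B_i ∈ ℍ^{o_i×n}, C_i, F_i ∈ ℍ^{m×q}, D_i, G_i ∈ ℍ^{p×n}, E_i ∈ ℍ^{m×n}, and the unknowns Z_i ∈ ℍ^{q×p} are shared between consecutive equations. Let 𝒟_i = (A_i, B_i, C_i, D_i, F_i, G_i, E_i). If the system has a solution, then: each 𝒟_i (i = 1, 2, 3) satisfies the consistency conditions; each of the coupled data couple(𝒟₁, 𝒟₂) and couple(𝒟₂, 𝒟₃) satisfies the consistency conditions; and the doubly coupled data couple(couple(𝒟₁, 𝒟₂), couple(𝒟₂, 𝒟₃)) satisfies the consistency conditions. -/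

import Mathlib

open Matrix

noncomputable section

/-- The four Penrose equations over the quaternions: `X` is a Moore–Penrose
inverse of `A`. -/
def IsMP {m n : Type} [Fintype m] [Fintype n]
    (A : Matrix m n (Quaternion ℝ)) (X : Matrix n m (Quaternion ℝ)) : Prop :=
  A * X * A = A ∧ X * A * X = X ∧ (A * X)ᴴ = A * X ∧ (X * A)ᴴ = X * A

open scoped Classical

/-- `mp A` is the Moore–Penrose inverse `A†` of `A` (it exists and is unique for
quaternion matrices). -/
def mp {m n : Type} [Fintype m] [Fintype n]
    (A : Matrix m n (Quaternion ℝ)) : Matrix n m (Quaternion ℝ) :=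
  if h : ∃ X, IsMP A X then h.choose else 0

/-- `projL A = L_A = 1 - A† A`. -/
def projL {m n : Type} [Fintype m] [Fintype n] [DecidableEq n]
    (A : Matrix m n (Quaternion ℝ)) : Matrix n n (Quaternion ℝ) :=
  1 - mp A * A

/-- `projR A = R_A = 1 - A A†`. -/
def projR {m n : Type} [Fintype m] [Fintype n] [DecidableEq m]
    (A : Matrix m n (Quaternion ℝ)) : Matrix m m (Quaternion ℝ) :=
  1 - A * mp A

/-- The data `𝒟 = (A, B, C, D, F, G, E)` of a four-term equation
`A X + Y B + C Z D + F W G = E` with `A : m×k`, `B : o×n`, `C : m×q`, `D : p×n`,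
`F : m×l`, `G : s×n`, `E : m×n`. -/
structure QData (m k o n q p l s : Type) where
  A : Matrix m k (Quaternion ℝ)
  B : Matrix o n (Quaternion ℝ)
  C : Matrix m q (Quaternion ℝ)
  D : Matrix p n (Quaternion ℝ)
  F : Matrix m l (Quaternion ℝ)
  G : Matrix s n (Quaternion ℝ)
  E : Matrix m n (Quaternion ℝ)

namespace QData

variable {m k o n q p l s : Type}
  [Fintype m] [Fintype k] [Fintype o] [Fintype n] [Fintype q] [Fintype p]
  [Fintype l] [Fintype s]
  [DecidableEq m] [DecidableEq k] [DecidableEq o] [DecidableEq n]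
  [DecidableEq q] [DecidableEq p] [DecidableEq l] [DecidableEq s]

/-- `A₀ = R_A C`. -/
def A0 (d : QData m k o n q p l s) : Matrix m q (Quaternion ℝ) := projR d.A * d.C

/-- `B₀ = D L_B`. -/
def B0 (d : QData m k o n q p l s) : Matrix p n (Quaternion ℝ) := d.D * projL d.B

/-- `C₀ = R_A F`. -/
def C0 (d : QData m k o n q p l s) : Matrix m l (Quaternion ℝ) := projR d.A * d.F

/-- `D₀ = G L_B`. -/
def D0 (d : QData m k o n q p l s) : Matrix s n (Quaternion ℝ) := d.G * projL d.B

/-- `E₀ = R_A E L_B`. -/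
def E0 (d : QData m k o n q p l s) : Matrix m n (Quaternion ℝ) := projR d.A * d.E * projL d.B

/-- `M = R_{A₀} C₀`. -/
def M (d : QData m k o n q p l s) : Matrix m l (Quaternion ℝ) := projR d.A0 * d.C0

/-- `N = D₀ L_{B₀}`. -/
def N (d : QData m k o n q p l s) : Matrix s n (Quaternion ℝ) := d.D0 * projL d.B0

/-- `S = C₀ L_M`. -/
def S (d : QData m k o n q p l s) : Matrix m l (Quaternion ℝ) := d.C0 * projL d.M

/-- The consistency conditions
`R_M R_{A₀} E₀ = 0`, `E₀ L_{B₀} L_N = 0`, `R_{A₀} E₀ L_{D₀} = 0`, `R_{C₀} E₀ L_{B₀} = 0`. -/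
def Consistent (d : QData m k o n q p l s) : Prop :=
  projR d.M * projR d.A0 * d.E0 = 0 ∧
  d.E0 * projL d.B0 * projL d.N = 0 ∧
  projR d.A0 * d.E0 * projL d.D0 = 0 ∧
  projR d.C0 * d.E0 * projL d.B0 = 0

/-- The coupled data `couple(𝒟, 𝒟')` of two four-term data sharing row/column spaces. -/
def couple {k' o' l' s' : Type}
    [Fintype k'] [Fintype o'] [Fintype l'] [Fintype s']
    [DecidableEq k'] [DecidableEq o'] [DecidableEq l'] [DecidableEq s']
    (d : QData m k o n q p l s) (d' : QData m k' o' n l s l' s') :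
    QData l (l ⊕ l) (s ⊕ s) s l s l' s' where
  A := Matrix.fromCols (projL d.M * projL d.S) (-(projL d'.A0))
  B := Matrix.fromRows (projR d.D0) (-(projR d'.B0))
  C := projL d.M
  D := projR d.N
  F := mp d'.A0 * d'.S
  G := projR d'.N * d'.D0 * mp d'.B0
  E := mp d.M * d.E0 * mp d.D0 + mp d.S * d.S * mp d.C0 * d.E0 * mp d.N
      - mp d'.A0 * d'.E0 * mp d'.B0
      + mp d'.A0 * d'.C0 * mp d'.M * d'.E0 * mp d'.B0
      + mp d'.A0 * d'.S * mp d'.C0 * d'.E0 * mp d'.N * d'.D0 * mp d'.B0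

end QData

/-! ### Existence of the Moore–Penrose inverse over the quaternions -/

set_option maxHeartbeats 2000000
set_option synthInstance.maxHeartbeats 1000000
set_option linter.unusedSectionVars false

local notation "K" => Quaternion ℝ

lemma sum_star_mul_self_eq_zero {ι : Type} [Fintype ι] (v : ι → K)
    (h : ∑ i, star (v i) * v i = 0) : v = 0 := by
  have h2 : ∑ i, ((Quaternion.normSq (v i) : ℝ) : K) = 0 := by
    simpa [Quaternion.star_mul_self] using h
  have h4 : (∑ i, Quaternion.normSq (v i) : ℝ) = 0 := by
    apply Quaternion.coe_injective
    have : ((∑ i, Quaternion.normSq (v i) : ℝ) : K)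
        = ∑ i, ((Quaternion.normSq (v i) : ℝ) : K) := by
      rw [← Quaternion.algebraMap_def, map_sum]
    rw [this, h2]
    simp
  funext i
  have hnn : ∀ j, 0 ≤ Quaternion.normSq (v j) := fun j => Quaternion.normSq_nonneg
  have := (Finset.sum_eq_zero_iff_of_nonneg (fun j _ => hnn j)).mp h4 i (Finset.mem_univ i)
  exact Quaternion.normSq_eq_zero.mp this

lemma sum_mul_star_self_eq_zero {ι : Type} [Fintype ι] (v : ι → K)
    (h : ∑ i, v i * star (v i) = 0) : v = 0 := by
  apply sum_star_mul_self_eq_zero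
  simpa [Quaternion.star_mul_self, Quaternion.self_mul_star] using h

lemma exists_inverse_of_vecMul_inj {t : Type} [Fintype t] (G : Matrix t t K)
    (hinj : ∀ x : t → K, x ᵥ* G = 0 → x = 0) :
    ∃ G' : Matrix t t K, G * G' = 1 ∧ G' * G = 1 := by
  have key : ∀ (H : Matrix t t K), (∀ x : t → K, x ᵥ* H = 0 → x = 0) →
      ∃ P : Matrix t t K, P * H = 1 := by
    intro H hH
    have hinj' : Function.Injective (H.vecMulLinear) := by
      rw [injective_iff_map_eq_zero']
      intro x
      constructor
      · intro hx; exact hH x (by simpa [Matrix.vecMulLinear_apply] using hx)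
      · rintro rfl; simp [Matrix.vecMulLinear_apply]
    have hsurj := LinearMap.injective_iff_surjective.mp hinj'
    choose P hP using fun i => hsurj (Pi.single i (1 : K))
    refine ⟨Matrix.of P, Matrix.ext fun i j => ?_⟩
    have h1 := congrFun (hP i) j
    rw [Matrix.vecMulLinear_apply] at h1
    rw [Matrix.mul_apply, Matrix.one_apply]
    simp only [Matrix.vecMul, dotProduct, Pi.single_apply] at h1
    show (∑ k, P i k * H k j) = _
    rw [h1]
    by_cases hij : i = j <;> simp [hij, eq_comm]
  obtain ⟨P, hP⟩ := key G hinj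
  have hPinj : ∀ x : t → K, x ᵥ* P = 0 → x = 0 := by
    intro x hx
    have h2 : x ᵥ* P ᵥ* G = 0 := by rw [hx]; simp
    rw [Matrix.vecMul_vecMul, hP] at h2
    simpa using h2
  obtain ⟨Q, hQ⟩ := key P hPinj
  have hQG : Q = G := by
    calc Q = Q * (P * G) := by rw [hP, mul_one]
    _ = (Q * P) * G := by rw [mul_assoc]
    _ = G := by rw [hQ, one_mul]
  exact ⟨P, by rw [← hQG, hQ], hP⟩

theorem exists_factorization {m n : Type} [Fintype m] [Fintype n] (A : Matrix m n K) :
    ∃ (t : Type) (_ : Fintype t) (B : Matrix m t K) (C : Matrix t n K),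
      A = B * C ∧ (∀ x : t → K, x ᵥ* C = 0 → x = 0) ∧
      (∀ u : t → K, B *ᵥ u = 0 → u = 0) := by
  classical
  set R : Submodule K (n → K) := LinearMap.range (A.vecMulLinear) with hR
  set t := Module.finrank K R with ht
  set b : Module.Basis (Fin t) K R := Module.finBasis K R with hb
  set C : Matrix (Fin t) n K := Matrix.of (fun i => (b i : n → K)) with hC
  have hmem : ∀ i : m, (A i) ∈ R := fun i =>
    ⟨Pi.single i 1, by rw [Matrix.vecMulLinear_apply]; exact Matrix.single_one_vecMul i A⟩
  set B : Matrix m (Fin t) K := Matrix.of (fun i k => b.repr ⟨A i, hmem i⟩ k) with hB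
  -- key computation: for any coefficient vector x, x ᵥ* C = coercion of ∑ x k • b k
  have hvC : ∀ x : Fin t → K, x ᵥ* C = ((∑ k, x k • b k : R) : n → K) := by
    intro x
    have hcoe : ((∑ k, x k • b k : R) : n → K) = ∑ k, x k • (b k : n → K) := by
      simp
    funext j
    rw [hcoe]
    simp only [Matrix.vecMul, dotProduct, hC, Matrix.of_apply, Finset.sum_apply,
      Pi.smul_apply, smul_eq_mul]
  have hCind : ∀ x : Fin t → K, x ᵥ* C = 0 → x = 0 := by
    intro x hx
    rw [hvC] at hx
    have : (∑ k, x k • b k : R) = 0 := by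
      apply Subtype.coe_injective; simpa using hx
    funext i
    exact (Fintype.linearIndependent_iff.mp b.linearIndependent) x this i
  have hBC : A = B * C := by
    refine Matrix.ext fun i j => ?_
    have h1 := congrArg (Subtype.val) (b.sum_repr ⟨A i, hmem i⟩)
    have h2 := hvC (fun k => b.repr ⟨A i, hmem i⟩ k)
    rw [h1] at h2
    have := congrFun h2 j
    simp only [Matrix.vecMul, dotProduct, hB, Matrix.of_apply] at this ⊢
    rw [Matrix.mul_apply]
    exact this.symm
  -- left invertibility of B
  have hBsur : ∀ c : Fin t → K, ∃ w : m → K, w ᵥ* B = c := by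
    intro c
    obtain ⟨w, hw⟩ : (∑ k, c k • b k : R).val ∈ R := (∑ k, c k • b k : R).2
    rw [Matrix.vecMulLinear_apply] at hw
    refine ⟨w, ?_⟩
    have h3 : (w ᵥ* B) ᵥ* C = c ᵥ* C := by
      rw [Matrix.vecMul_vecMul, ← hBC, hw, hvC]
    have h4 : ((w ᵥ* B) - c) ᵥ* C = 0 := by
      rw [Matrix.sub_vecMul, h3, sub_self]
    have := hCind _ h4
    exact sub_eq_zero.mp this
  choose P hP using fun k => hBsur (Pi.single k 1)
  refine ⟨Fin t, inferInstance, B, C, hBC, hCind, fun u hu => ?_⟩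
  funext k
  have h1 : (P k ᵥ* B) ⬝ᵥ u = P k ⬝ᵥ (B *ᵥ u) := (Matrix.dotProduct_mulVec _ _ _).symm
  rw [hP k, hu] at h1
  simpa [dotProduct, Pi.single_apply] using h1

lemma vecMul_mul_conjTranspose_dot {t n : Type} [Fintype t] [Fintype n]
    (C : Matrix t n K) (x : t → K) :
    (x ᵥ* (C * Cᴴ)) ⬝ᵥ star x = ∑ j, (x ᵥ* C) j * star ((x ᵥ* C) j) := by
  rw [← Matrix.vecMul_vecMul, ← Matrix.dotProduct_mulVec, ← Matrix.star_vecMul]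
  simp [dotProduct]

lemma conjTranspose_mul_mulVec_dot {t n : Type} [Fintype t] [Fintype n]
    (B : Matrix n t K) (u : t → K) :
    star u ⬝ᵥ ((Bᴴ * B) *ᵥ u) = ∑ j, star ((B *ᵥ u) j) * (B *ᵥ u) j := by
  rw [← Matrix.mulVec_mulVec, Matrix.dotProduct_mulVec, ← Matrix.star_mulVec]
  simp [dotProduct]

theorem exists_isMP' {m n : Type} [Fintype m] [Fintype n] (A : Matrix m n K) :
    ∃ X : Matrix n m K,
      A * X * A = A ∧ X * A * X = X ∧ (A * X)ᴴ = A * X ∧ (X * A)ᴴ = X * A := by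
  obtain ⟨t, _, B, C, hBC, hC, hB⟩ := exists_factorization A
  -- G = C Cᴴ invertible
  obtain ⟨G', hGG', hG'G⟩ := exists_inverse_of_vecMul_inj (C * Cᴴ) (by
    intro x hx
    apply hC
    apply sum_mul_star_self_eq_zero
    rw [← vecMul_mul_conjTranspose_dot C x, hx]
    simp)
  -- H = Bᴴ B invertible
  obtain ⟨H', hHH', hH'H⟩ := exists_inverse_of_vecMul_inj (Bᴴ * B) (by
    intro x hx
    have hherm : (Bᴴ * B)ᴴ = Bᴴ * B := by
      rw [Matrix.conjTranspose_mul, Matrix.conjTranspose_conjTranspose]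
    have hcol : (Bᴴ * B) *ᵥ star x = 0 := by
      have := congrArg star hx
      rw [Matrix.star_vecMul, hherm] at this
      simpa using this
    have hz : B *ᵥ star x = 0 := by
      apply sum_star_mul_self_eq_zero
      rw [← conjTranspose_mul_mulVec_dot B (star x), hcol]
      simp
    have := hB _ hz
    have := congrArg star this
    simpa using this)
  -- hermitian-ness of inverses
  have hGh : (C * Cᴴ)ᴴ = C * Cᴴ := by
    rw [Matrix.conjTranspose_mul, Matrix.conjTranspose_conjTranspose]
  have hHh : (Bᴴ * B)ᴴ = Bᴴ * B := by
    rw [Matrix.conjTranspose_mul, Matrix.conjTranspose_conjTranspose]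
  have hG'h : G'ᴴ = G' := by
    have h2 : G'ᴴ * (C * Cᴴ) = 1 := by
      rw [← hGh, ← Matrix.conjTranspose_mul, hGG', Matrix.conjTranspose_one]
    calc G'ᴴ = G'ᴴ * (C * Cᴴ * G') := by rw [hGG', mul_one]
    _ = (G'ᴴ * (C * Cᴴ)) * G' := by rw [← mul_assoc]
    _ = G' := by rw [h2, one_mul]
  have hH'h : H'ᴴ = H' := by
    have h2 : H'ᴴ * (Bᴴ * B) = 1 := by
      rw [← hHh, ← Matrix.conjTranspose_mul, hHH', Matrix.conjTranspose_one]
    calc H'ᴴ = H'ᴴ * (Bᴴ * B * H') := by rw [hHH', mul_one]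
    _ = (H'ᴴ * (Bᴴ * B)) * H' := by rw [← mul_assoc]
    _ = H' := by rw [h2, one_mul]
  subst hBC
  have k1 : B * C * Cᴴ * G' = B := by
    rw [Matrix.mul_assoc B, Matrix.mul_assoc B, hGG', Matrix.mul_one]
  have k2 : B * H' * Bᴴ * B = B := by
    rw [Matrix.mul_assoc (B * H'), Matrix.mul_assoc B H', hH'H, Matrix.mul_one]
  have k3 : Cᴴ * G' * H' * Bᴴ * B = Cᴴ * G' := by
    rw [Matrix.mul_assoc (Cᴴ * G' * H'), Matrix.mul_assoc (Cᴴ * G'), hH'H, Matrix.mul_one]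
  have k4 : Cᴴ * G' * C * Cᴴ * G' = Cᴴ * G' := by
    rw [Matrix.mul_assoc (Cᴴ * G' * C), Matrix.mul_assoc (Cᴴ * G'), ← Matrix.mul_assoc C, hGG', Matrix.mul_one]
  refine ⟨Cᴴ * G' * H' * Bᴴ, ?_, ?_, ?_, ?_⟩
  · -- A X A = A
    simp only [← Matrix.mul_assoc]
    rw [k1, k2]
  · -- X A X = X
    simp only [← Matrix.mul_assoc]
    rw [k3, k4]
  · -- (A X)ᴴ = A X
    simp only [← Matrix.mul_assoc]
    rw [k1]
    simp only [Matrix.conjTranspose_mul, Matrix.conjTranspose_conjTranspose, hH'h,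
      Matrix.mul_assoc]
  · -- (X A)ᴴ = X A
    simp only [← Matrix.mul_assoc]
    rw [k3]
    simp only [Matrix.conjTranspose_mul, Matrix.conjTranspose_conjTranspose, hG'h,
      Matrix.mul_assoc]


set_option maxHeartbeats 1000000
set_option linter.unusedSectionVars false
set_option synthInstance.maxHeartbeats 400000

section Basic

variable {m n l s : Type} [Fintype m] [Fintype n] [Fintype l] [Fintype s]
  [DecidableEq m] [DecidableEq n] [DecidableEq l] [DecidableEq s]

theorem isMP_mp (A : Matrix m n (Quaternion ℝ)) : IsMP A (mp A) := by
  have h : ∃ X, IsMP A X := exists_isMP' A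
  rw [mp, dif_pos h]
  exact h.choose_spec

theorem mp_cancel (A : Matrix m n (Quaternion ℝ)) : A * mp A * A = A := (isMP_mp A).1
theorem mp_cancel' (A : Matrix m n (Quaternion ℝ)) : mp A * A * mp A = mp A := (isMP_mp A).2.1

theorem projR_mul (A : Matrix m n (Quaternion ℝ)) : projR A * A = 0 := by
  rw [projR, Matrix.sub_mul, Matrix.one_mul, mp_cancel, sub_self]

theorem mul_projL (A : Matrix m n (Quaternion ℝ)) : A * projL A = 0 := by
  rw [projL, Matrix.mul_sub, Matrix.mul_one, ← Matrix.mul_assoc, mp_cancel, sub_self]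

theorem projR_mul_left (A : Matrix m n (Quaternion ℝ)) (X : Matrix n l (Quaternion ℝ)) :
    projR A * (A * X) = 0 := by
  rw [← Matrix.mul_assoc, projR_mul, Matrix.zero_mul]

theorem mul_mul_projL (A : Matrix m n (Quaternion ℝ)) (Y : Matrix l m (Quaternion ℝ)) :
    Y * A * projL A = 0 := by
  rw [Matrix.mul_assoc, mul_projL, Matrix.mul_zero]

theorem projR_conj (A : Matrix m n (Quaternion ℝ)) : (projR A)ᴴ = projR A := by
  rw [projR, Matrix.conjTranspose_sub, Matrix.conjTranspose_one, (isMP_mp A).2.2.1]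

theorem projL_conj (A : Matrix m n (Quaternion ℝ)) : (projL A)ᴴ = projL A := by
  rw [projL, Matrix.conjTranspose_sub, Matrix.conjTranspose_one, (isMP_mp A).2.2.2]

theorem mulmp_idem (A : Matrix m n (Quaternion ℝ)) :
    (A * mp A) * (A * mp A) = A * mp A := by
  rw [← Matrix.mul_assoc, mp_cancel]

theorem mpmul_idem (A : Matrix m n (Quaternion ℝ)) :
    (mp A * A) * (mp A * A) = mp A * A := by
  rw [← Matrix.mul_assoc, mp_cancel']

theorem projR_projR (A : Matrix m n (Quaternion ℝ)) : projR A * projR A = projR A := by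
  rw [projR, Matrix.sub_mul, Matrix.one_mul, Matrix.mul_sub, Matrix.mul_one, mulmp_idem,
    sub_self, sub_zero]

theorem projL_projL (A : Matrix m n (Quaternion ℝ)) : projL A * projL A = projL A := by
  rw [projL, Matrix.sub_mul, Matrix.one_mul, Matrix.mul_sub, Matrix.mul_one, mpmul_idem,
    sub_self, sub_zero]

/-- If `P` is Hermitian idempotent and `M = P * C` then `mp M * P = mp M`. -/
theorem mp_absorb_right (P : Matrix m m (Quaternion ℝ)) (hP : Pᴴ = P) (hPP : P * P = P)
    (C : Matrix m l (Quaternion ℝ)) : mp (P * C) * P = mp (P * C) := by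
  set M := P * C with hM
  have h2 : (M * mp M)ᴴ = M * mp M := (isMP_mp M).2.2.1
  have h1 : M * mp M * P = M * mp M := by
    calc M * mp M * P = (M * mp M)ᴴ * P := by rw [h2]
    _ = (mp M)ᴴ * (Cᴴ * (P * P)) := by
        rw [Matrix.conjTranspose_mul, hM, Matrix.conjTranspose_mul, hP]
        simp only [Matrix.mul_assoc]
    _ = (mp M)ᴴ * (Cᴴ * P) := by rw [hPP]
    _ = (M * mp M)ᴴ := by rw [Matrix.conjTranspose_mul M, hM, Matrix.conjTranspose_mul, hP]
    _ = M * mp M := h2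
  calc mp M * P = mp M * M * mp M * P := by rw [mp_cancel']
  _ = mp M * (M * mp M * P) := by simp only [Matrix.mul_assoc]
  _ = mp M * (M * mp M) := by rw [h1]
  _ = mp M := by rw [← Matrix.mul_assoc, mp_cancel']

/-- If `Q` is Hermitian idempotent and `N = D * Q` then `Q * mp N = mp N`. -/
theorem mp_absorb_left (Q : Matrix n n (Quaternion ℝ)) (hQ : Qᴴ = Q) (hQQ : Q * Q = Q)
    (D : Matrix s n (Quaternion ℝ)) : Q * mp (D * Q) = mp (D * Q) := by
  set N := D * Q with hN
  have h2 : (mp N * N)ᴴ = mp N * N := (isMP_mp N).2.2.2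
  have h1 : Q * (mp N * N) = mp N * N := by
    calc Q * (mp N * N) = Q * (mp N * N)ᴴ := by rw [h2]
    _ = ((Q * Q) * Dᴴ) * (mp N)ᴴ := by
        rw [Matrix.conjTranspose_mul, hN, Matrix.conjTranspose_mul, hQ]
        simp only [Matrix.mul_assoc]
    _ = (Q * Dᴴ) * (mp N)ᴴ := by rw [hQQ]
    _ = (mp N * N)ᴴ := by rw [Matrix.conjTranspose_mul (mp N), hN, Matrix.conjTranspose_mul, hQ, Matrix.mul_assoc]
    _ = mp N * N := h2
  calc Q * mp N = Q * (mp N * N * mp N) := by rw [mp_cancel']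
  _ = Q * (mp N * N) * mp N := by simp only [Matrix.mul_assoc]
  _ = mp N * N * mp N := by rw [h1]
  _ = mp N := by rw [mp_cancel']

end Basic

section DataLemmas

variable {m k o n q p l s : Type}
  [Fintype m] [Fintype k] [Fintype o] [Fintype n] [Fintype q] [Fintype p]
  [Fintype l] [Fintype s]
  [DecidableEq m] [DecidableEq k] [DecidableEq o] [DecidableEq n]
  [DecidableEq q] [DecidableEq p] [DecidableEq l] [DecidableEq s]
  (d : QData m k o n q p l s)

theorem mpM_RA0 : mp d.M * projR d.A0 = mp d.M :=
  mp_absorb_right (projR d.A0) (projR_conj _) (projR_projR _) d.C0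

theorem LB0_mpN : projL d.B0 * mp d.N = mp d.N :=
  mp_absorb_left (projL d.B0) (projL_conj _) (projL_projL _) d.D0

theorem LM_mpS : projL d.M * mp d.S = mp d.S :=
  mp_absorb_left (projL d.M) (projL_conj _) (projL_projL _) d.C0

theorem DD_NN : (d.D0 * mp d.D0) * (d.N * mp d.N) = d.N * mp d.N := by
  have h1 : (d.D0 * mp d.D0) * d.N = d.N := by
    show (d.D0 * mp d.D0) * (d.D0 * projL d.B0) = d.D0 * projL d.B0
    rw [← Matrix.mul_assoc, mp_cancel]
  rw [← Matrix.mul_assoc, h1]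

theorem SS_CC : (mp d.S * d.S) * (mp d.C0 * d.C0) = mp d.S * d.S := by
  have h0 : d.M * projL d.C0 = 0 := by
    show (projR d.A0 * d.C0) * projL d.C0 = 0
    exact mul_mul_projL _ _
  have h1 : projL d.M * projL d.C0 = projL d.C0 := by
    rw [projL, Matrix.sub_mul, Matrix.one_mul, Matrix.mul_assoc, h0, Matrix.mul_zero, sub_zero]
  have h2 : d.S * projL d.C0 = 0 := by
    show (d.C0 * projL d.M) * projL d.C0 = 0
    rw [Matrix.mul_assoc, h1, mul_projL]
  have h3 : mp d.C0 * d.C0 = 1 - projL d.C0 := by rw [projL, sub_sub_cancel]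
  rw [h3, Matrix.mul_sub, Matrix.mul_one, Matrix.mul_assoc, h2, Matrix.mul_zero, sub_zero]

theorem E0_solution {X : Matrix k n (Quaternion ℝ)} {Y : Matrix m o (Quaternion ℝ)}
    {Z : Matrix q p (Quaternion ℝ)} {W : Matrix l s (Quaternion ℝ)}
    (h : d.A * X + Y * d.B + d.C * Z * d.D + d.F * W * d.G = d.E) :
    d.E0 = d.A0 * Z * d.B0 + d.C0 * W * d.D0 := by
  rw [QData.E0, ← h]
  simp only [QData.A0, QData.B0, QData.C0, QData.D0, Matrix.mul_add, Matrix.add_mul,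
    Matrix.mul_assoc, projR_mul_left, mul_projL, Matrix.mul_zero, Matrix.zero_mul,
    add_zero, zero_add]

theorem RA0_E0 (Z : Matrix q p (Quaternion ℝ)) (W : Matrix l s (Quaternion ℝ))
    (heq : d.E0 = d.A0 * Z * d.B0 + d.C0 * W * d.D0) :
    projR d.A0 * d.E0 = d.M * (W * d.D0) := by
  rw [heq, Matrix.mul_add, Matrix.mul_assoc d.A0, projR_mul_left, zero_add]
  show _ = (projR d.A0 * d.C0) * (W * d.D0)
  simp only [Matrix.mul_assoc]

theorem E0_LB0 (Z : Matrix q p (Quaternion ℝ)) (W : Matrix l s (Quaternion ℝ))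
    (heq : d.E0 = d.A0 * Z * d.B0 + d.C0 * W * d.D0) :
    d.E0 * projL d.B0 = d.C0 * (W * d.N) := by
  rw [heq, Matrix.add_mul, mul_mul_projL, zero_add]
  show (d.C0 * W * d.D0) * projL d.B0 = d.C0 * (W * (d.D0 * projL d.B0))
  simp only [Matrix.mul_assoc]

theorem consistent_of_pair (Z : Matrix q p (Quaternion ℝ)) (W : Matrix l s (Quaternion ℝ))
    (heq : d.E0 = d.A0 * Z * d.B0 + d.C0 * W * d.D0) : d.Consistent := by
  refine ⟨?_, ?_, ?_, ?_⟩
  · rw [Matrix.mul_assoc, RA0_E0 d Z W heq, projR_mul_left]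
  · rw [E0_LB0 d Z W heq, Matrix.mul_assoc, Matrix.mul_assoc, mul_projL, Matrix.mul_zero,
      Matrix.mul_zero]
  · rw [RA0_E0 d Z W heq, Matrix.mul_assoc, Matrix.mul_assoc, mul_projL, Matrix.mul_zero,
      Matrix.mul_zero]
  · rw [Matrix.mul_assoc, E0_LB0 d Z W heq, projR_mul_left]

end DataLemmas

section Key

theorem abstract_key {l s : Type} [Fintype l] [Fintype s] [DecidableEq l] [DecidableEq s]
    (P1 P2 : Matrix l l (Quaternion ℝ)) (Q1 Q2 : Matrix s s (Quaternion ℝ))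
    (W : Matrix l s (Quaternion ℝ)) (h12 : P1 * P2 = 0) (hQ : Q1 * Q2 = Q2) :
    P1 * (W * Q1) + P2 * (W * Q2) + (1 - P1) * (1 - P2) * (W * Q2)
      + (1 - P1) * (W * Q1) * (1 - Q2) + W * (1 - Q1) = W := by
  have h12' : ∀ X : Matrix l s (Quaternion ℝ), P1 * (P2 * X) = 0 := fun X => by
    rw [← Matrix.mul_assoc, h12, Matrix.zero_mul]
  simp only [Matrix.mul_sub, Matrix.sub_mul, Matrix.mul_one, Matrix.one_mul,
    Matrix.mul_assoc, hQ, h12', sub_zero, Matrix.mul_zero, Matrix.zero_mul]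
  abel

variable {m k o n q p l s : Type}
  [Fintype m] [Fintype k] [Fintype o] [Fintype n] [Fintype q] [Fintype p]
  [Fintype l] [Fintype s]
  [DecidableEq m] [DecidableEq k] [DecidableEq o] [DecidableEq n]
  [DecidableEq q] [DecidableEq p] [DecidableEq l] [DecidableEq s]
  (d : QData m k o n q p l s)

theorem keyY (Z : Matrix q p (Quaternion ℝ)) (W : Matrix l s (Quaternion ℝ))
    (heq : d.E0 = d.A0 * Z * d.B0 + d.C0 * W * d.D0) :
    mp d.M * d.E0 * mp d.D0 + mp d.S * d.S * mp d.C0 * d.E0 * mp d.N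
      + projL d.M * projL d.S * (W * (d.N * mp d.N))
      + projL d.M * (W * (d.D0 * mp d.D0)) * projR d.N
      + W * projR d.D0 = W := by
  have e1 : mp d.M * d.E0 = mp d.M * (d.M * (W * d.D0)) := by
    calc mp d.M * d.E0 = (mp d.M * projR d.A0) * d.E0 := by rw [mpM_RA0]
    _ = mp d.M * (projR d.A0 * d.E0) := by rw [Matrix.mul_assoc]
    _ = mp d.M * (d.M * (W * d.D0)) := by rw [RA0_E0 d Z W heq]
  have c1 : mp d.M * d.E0 * mp d.D0 = (mp d.M * d.M) * (W * (d.D0 * mp d.D0)) := by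
    rw [e1]; simp only [Matrix.mul_assoc]
  have e2 : d.E0 * mp d.N = d.C0 * (W * (d.N * mp d.N)) := by
    calc d.E0 * mp d.N = d.E0 * (projL d.B0 * mp d.N) := by rw [LB0_mpN]
    _ = (d.E0 * projL d.B0) * mp d.N := by rw [Matrix.mul_assoc]
    _ = (d.C0 * (W * d.N)) * mp d.N := by rw [E0_LB0 d Z W heq]
    _ = d.C0 * (W * (d.N * mp d.N)) := by simp only [Matrix.mul_assoc]
  have c2 : mp d.S * d.S * mp d.C0 * d.E0 * mp d.N
      = (mp d.S * d.S) * (W * (d.N * mp d.N)) := by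
    calc mp d.S * d.S * mp d.C0 * d.E0 * mp d.N
        = (mp d.S * d.S * mp d.C0) * (d.E0 * mp d.N) := by rw [Matrix.mul_assoc]
    _ = (mp d.S * d.S * mp d.C0) * (d.C0 * (W * (d.N * mp d.N))) := by rw [e2]
    _ = ((mp d.S * d.S) * (mp d.C0 * d.C0)) * (W * (d.N * mp d.N)) := by
        simp only [Matrix.mul_assoc]
    _ = (mp d.S * d.S) * (W * (d.N * mp d.N)) := by rw [SS_CC]
  have h0 : mp d.M * d.M * mp d.S = 0 := by
    have h := LM_mpS d
    rw [projL, Matrix.sub_mul, Matrix.one_mul] at h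
    exact sub_eq_self.mp h
  have h12 : (mp d.M * d.M) * (mp d.S * d.S) = 0 := by
    rw [← Matrix.mul_assoc, h0, Matrix.zero_mul]
  have hLM : projL d.M = 1 - mp d.M * d.M := rfl
  have hLS : projL d.S = 1 - mp d.S * d.S := rfl
  have hRN : projR d.N = 1 - d.N * mp d.N := rfl
  have hRD : projR d.D0 = 1 - d.D0 * mp d.D0 := rfl
  rw [c1, c2, hLM, hLS, hRN, hRD]
  exact abstract_key _ _ _ _ W h12 (DD_NN d)

end Key

section KeyX

variable {m k o n q p l s : Type}
  [Fintype m] [Fintype k] [Fintype o] [Fintype n] [Fintype q] [Fintype p]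
  [Fintype l] [Fintype s]
  [DecidableEq m] [DecidableEq k] [DecidableEq o] [DecidableEq n]
  [DecidableEq q] [DecidableEq p] [DecidableEq l] [DecidableEq s]
  (d : QData m k o n q p l s)

theorem claim2 (Z : Matrix q p (Quaternion ℝ)) (W : Matrix l s (Quaternion ℝ))
    (heq : d.E0 = d.A0 * Z * d.B0 + d.C0 * W * d.D0) :
    d.C0 * (W * d.D0)
      = d.C0 * (mp d.M * d.E0) + d.S * (mp d.C0 * (d.E0 * (mp d.N * d.D0)))
        + d.S * (W * (d.D0 * (mp d.D0 * (projR d.N * d.D0)))) := by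
  have e1 : mp d.M * d.E0 = mp d.M * (d.M * (W * d.D0)) := by
    calc mp d.M * d.E0 = (mp d.M * projR d.A0) * d.E0 := by rw [mpM_RA0]
    _ = mp d.M * (projR d.A0 * d.E0) := by rw [Matrix.mul_assoc]
    _ = mp d.M * (d.M * (W * d.D0)) := by rw [RA0_E0 d Z W heq]
  have hD : d.D0 * (mp d.D0 * d.D0) = d.D0 := by rw [← Matrix.mul_assoc, mp_cancel]
  have he3 : mp d.M * (d.E0 * (mp d.D0 * d.D0)) = mp d.M * d.E0 := by
    calc mp d.M * (d.E0 * (mp d.D0 * d.D0)) = (mp d.M * d.E0) * (mp d.D0 * d.D0) := by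
          rw [Matrix.mul_assoc]
    _ = (mp d.M * (d.M * (W * d.D0))) * (mp d.D0 * d.D0) := by rw [e1]
    _ = mp d.M * (d.M * (W * (d.D0 * (mp d.D0 * d.D0)))) := by simp only [Matrix.mul_assoc]
    _ = mp d.M * (d.M * (W * d.D0)) := by rw [hD]
    _ = mp d.M * d.E0 := e1.symm
  have hC0mpS : ∀ X : Matrix m n (Quaternion ℝ),
      d.C0 * (mp d.S * X) = d.S * (mp d.S * X) := by
    intro X
    rw [← Matrix.mul_assoc, ← Matrix.mul_assoc]
    conv_lhs => rw [← LM_mpS d]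
    rw [← Matrix.mul_assoc]
    rfl
  have hS3 : ∀ X : Matrix l n (Quaternion ℝ), d.S * (mp d.S * (d.S * X)) = d.S * X := by
    intro X
    rw [← Matrix.mul_assoc, ← Matrix.mul_assoc, mp_cancel]
  have hC0LM : ∀ X : Matrix l n (Quaternion ℝ), d.C0 * (projL d.M * X) = d.S * X := by
    intro X
    rw [← Matrix.mul_assoc]
    rfl
  have hSLS : ∀ X : Matrix l n (Quaternion ℝ), d.S * (projL d.S * X) = 0 := by
    intro X
    rw [← Matrix.mul_assoc, mul_projL, Matrix.zero_mul]
  have h := congrArg (fun T : Matrix l s (Quaternion ℝ) => d.C0 * (T * d.D0))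
    (keyY d Z W heq)
  simp only [Matrix.add_mul, Matrix.mul_add, Matrix.mul_assoc, projR_mul,
    Matrix.mul_zero, Matrix.zero_mul, add_zero, zero_add, he3, hC0mpS, hS3, hC0LM, hSLS] at h
  rw [← h]

end KeyX

section KeyX2

variable {m k o n q p l s : Type}
  [Fintype m] [Fintype k] [Fintype o] [Fintype n] [Fintype q] [Fintype p]
  [Fintype l] [Fintype s]
  [DecidableEq m] [DecidableEq k] [DecidableEq o] [DecidableEq n]
  [DecidableEq q] [DecidableEq p] [DecidableEq l] [DecidableEq s]
  (d : QData m k o n q p l s)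

theorem keyX (Z : Matrix q p (Quaternion ℝ)) (W : Matrix l s (Quaternion ℝ))
    (heq : d.E0 = d.A0 * Z * d.B0 + d.C0 * W * d.D0) :
    mp d.A0 * d.E0 * mp d.B0
      - mp d.A0 * d.C0 * mp d.M * d.E0 * mp d.B0
      - mp d.A0 * d.S * mp d.C0 * d.E0 * mp d.N * d.D0 * mp d.B0
      - mp d.A0 * (d.S * (W * (d.D0 * (mp d.D0 * (projR d.N * d.D0))))) * mp d.B0
      + projL d.A0 * (Z * (d.B0 * mp d.B0)) + Z * projR d.B0 = Z := by
  have base : (mp d.A0 * d.A0) * (Z * (d.B0 * mp d.B0))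
      + projL d.A0 * (Z * (d.B0 * mp d.B0)) + Z * projR d.B0 = Z := by
    have h1 : projL d.A0 = 1 - mp d.A0 * d.A0 := rfl
    have h2 : projR d.B0 = 1 - d.B0 * mp d.B0 := rfl
    rw [h1, h2]
    simp only [Matrix.sub_mul, Matrix.mul_sub, Matrix.one_mul, Matrix.mul_one]
    abel
  have hAZB : d.A0 * Z * d.B0 = d.E0 - d.C0 * W * d.D0 := eq_sub_of_add_eq heq.symm
  have main : (mp d.A0 * d.A0) * (Z * (d.B0 * mp d.B0))
      = mp d.A0 * d.E0 * mp d.B0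
        - mp d.A0 * d.C0 * mp d.M * d.E0 * mp d.B0
        - mp d.A0 * d.S * mp d.C0 * d.E0 * mp d.N * d.D0 * mp d.B0
        - mp d.A0 * (d.S * (W * (d.D0 * (mp d.D0 * (projR d.N * d.D0))))) * mp d.B0 := by
    calc (mp d.A0 * d.A0) * (Z * (d.B0 * mp d.B0))
        = mp d.A0 * (d.A0 * Z * d.B0) * mp d.B0 := by simp only [Matrix.mul_assoc]
    _ = mp d.A0 * (d.E0 - d.C0 * W * d.D0) * mp d.B0 := by rw [hAZB]
    _ = mp d.A0 * d.E0 * mp d.B0 - mp d.A0 * (d.C0 * W * d.D0) * mp d.B0 := by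
        rw [Matrix.mul_sub, Matrix.sub_mul]
    _ = _ := by
        rw [Matrix.mul_assoc d.C0 W d.D0, claim2 d Z W heq]
        simp only [Matrix.mul_add, Matrix.add_mul, Matrix.mul_assoc]
        abel
  rw [← main]
  exact base

end KeyX2

section Couple

variable {m k o n q p l s k' o' l' s' : Type}
  [Fintype m] [Fintype k] [Fintype o] [Fintype n] [Fintype q] [Fintype p]
  [Fintype l] [Fintype s] [Fintype k'] [Fintype o'] [Fintype l'] [Fintype s']
  [DecidableEq m] [DecidableEq k] [DecidableEq o] [DecidableEq n]
  [DecidableEq q] [DecidableEq p] [DecidableEq l] [DecidableEq s]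
  [DecidableEq k'] [DecidableEq o'] [DecidableEq l'] [DecidableEq s']

theorem couple_solution (d : QData m k o n q p l s) (d' : QData m k' o' n l s l' s')
    (Z : Matrix q p (Quaternion ℝ)) (W : Matrix l s (Quaternion ℝ))
    (W'' : Matrix l' s' (Quaternion ℝ))
    (heq : d.E0 = d.A0 * Z * d.B0 + d.C0 * W * d.D0)
    (heq' : d'.E0 = d'.A0 * W * d'.B0 + d'.C0 * W'' * d'.D0) :
    (d.couple d').A * (Matrix.fromRows (-(W * (d.N * mp d.N))) (-(W * (d'.B0 * mp d'.B0))))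
      + (Matrix.fromCols (-W) (-W)) * (d.couple d').B
      + (d.couple d').C * (-(W * (d.D0 * mp d.D0))) * (d.couple d').D
      + (d.couple d').F * (-(W'' * (d'.D0 * mp d'.D0))) * (d.couple d').G
      = (d.couple d').E := by
  have hY := keyY d Z W heq
  have hX := keyX d' W W'' heq'
  have h3 := hY.trans hX.symm
  simp only [QData.couple]
  rw [Matrix.fromCols_mul_fromRows, Matrix.fromCols_mul_fromRows]
  rw [← sub_eq_zero] at h3 ⊢
  simp only [Matrix.neg_mul, Matrix.mul_neg, neg_neg, Matrix.mul_assoc] at h3 ⊢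
  replace h3 := congrArg (fun x => -x) h3
  simp only [neg_zero] at h3
  abel_nf at h3 ⊢
  exact h3

end Couple

/-- If the system `Aᵢ Xᵢ + Yᵢ Bᵢ + Cᵢ Zᵢ Dᵢ + Fᵢ Z_{i+1} Gᵢ = Eᵢ` (i = 1, 2, 3)
is solvable, then each data, each coupled data and the doubly coupled data
satisfy the consistency conditions. -/
theorem system_three_solvable_necessary {m n q p k₁ k₂ k₃ o₁ o₂ o₃ : Type}
    [Fintype m] [Fintype n] [Fintype q] [Fintype p]
    [Fintype k₁] [Fintype k₂] [Fintype k₃] [Fintype o₁] [Fintype o₂] [Fintype o₃]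
    [DecidableEq m] [DecidableEq n] [DecidableEq q] [DecidableEq p]
    [DecidableEq k₁] [DecidableEq k₂] [DecidableEq k₃]
    [DecidableEq o₁] [DecidableEq o₂] [DecidableEq o₃]
    (A₁ : Matrix m k₁ (Quaternion ℝ)) (A₂ : Matrix m k₂ (Quaternion ℝ))
    (A₃ : Matrix m k₃ (Quaternion ℝ))
    (B₁ : Matrix o₁ n (Quaternion ℝ)) (B₂ : Matrix o₂ n (Quaternion ℝ))
    (B₃ : Matrix o₃ n (Quaternion ℝ))
    (C₁ C₂ C₃ F₁ F₂ F₃ : Matrix m q (Quaternion ℝ))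
    (D₁ D₂ D₃ G₁ G₂ G₃ : Matrix p n (Quaternion ℝ))
    (E₁ E₂ E₃ : Matrix m n (Quaternion ℝ))
    (hsol : ∃ (X₁ : Matrix k₁ n (Quaternion ℝ)) (X₂ : Matrix k₂ n (Quaternion ℝ))
        (X₃ : Matrix k₃ n (Quaternion ℝ))
        (Y₁ : Matrix m o₁ (Quaternion ℝ)) (Y₂ : Matrix m o₂ (Quaternion ℝ))
        (Y₃ : Matrix m o₃ (Quaternion ℝ))
        (Z₁ Z₂ Z₃ Z₄ : Matrix q p (Quaternion ℝ)),
        A₁ * X₁ + Y₁ * B₁ + C₁ * Z₁ * D₁ + F₁ * Z₂ * G₁ = E₁ ∧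
        A₂ * X₂ + Y₂ * B₂ + C₂ * Z₂ * D₂ + F₂ * Z₃ * G₂ = E₂ ∧
        A₃ * X₃ + Y₃ * B₃ + C₃ * Z₃ * D₃ + F₃ * Z₄ * G₃ = E₃) :
    (QData.mk A₁ B₁ C₁ D₁ F₁ G₁ E₁).Consistent ∧
    (QData.mk A₂ B₂ C₂ D₂ F₂ G₂ E₂).Consistent ∧
    (QData.mk A₃ B₃ C₃ D₃ F₃ G₃ E₃).Consistent ∧
    ((QData.mk A₁ B₁ C₁ D₁ F₁ G₁ E₁).couple (QData.mk A₂ B₂ C₂ D₂ F₂ G₂ E₂)).Consistent ∧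
    ((QData.mk A₂ B₂ C₂ D₂ F₂ G₂ E₂).couple (QData.mk A₃ B₃ C₃ D₃ F₃ G₃ E₃)).Consistent ∧
    (((QData.mk A₁ B₁ C₁ D₁ F₁ G₁ E₁).couple (QData.mk A₂ B₂ C₂ D₂ F₂ G₂ E₂)).couple
      ((QData.mk A₂ B₂ C₂ D₂ F₂ G₂ E₂).couple (QData.mk A₃ B₃ C₃ D₃ F₃ G₃ E₃))).Consistent := by
  classical
  obtain ⟨X₁, X₂, X₃, Y₁, Y₂, Y₃, Z₁, Z₂, Z₃, Z₄, h1, h2, h3⟩ := hsol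
  have he₁ : (QData.mk A₁ B₁ C₁ D₁ F₁ G₁ E₁).E0
      = (QData.mk A₁ B₁ C₁ D₁ F₁ G₁ E₁).A0 * Z₁ * (QData.mk A₁ B₁ C₁ D₁ F₁ G₁ E₁).B0
        + (QData.mk A₁ B₁ C₁ D₁ F₁ G₁ E₁).C0 * Z₂ * (QData.mk A₁ B₁ C₁ D₁ F₁ G₁ E₁).D0 :=
    E0_solution _ h1
  have he₂ : (QData.mk A₂ B₂ C₂ D₂ F₂ G₂ E₂).E0
      = (QData.mk A₂ B₂ C₂ D₂ F₂ G₂ E₂).A0 * Z₂ * (QData.mk A₂ B₂ C₂ D₂ F₂ G₂ E₂).B0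
        + (QData.mk A₂ B₂ C₂ D₂ F₂ G₂ E₂).C0 * Z₃ * (QData.mk A₂ B₂ C₂ D₂ F₂ G₂ E₂).D0 :=
    E0_solution _ h2
  have he₃ : (QData.mk A₃ B₃ C₃ D₃ F₃ G₃ E₃).E0
      = (QData.mk A₃ B₃ C₃ D₃ F₃ G₃ E₃).A0 * Z₃ * (QData.mk A₃ B₃ C₃ D₃ F₃ G₃ E₃).B0
        + (QData.mk A₃ B₃ C₃ D₃ F₃ G₃ E₃).C0 * Z₄ * (QData.mk A₃ B₃ C₃ D₃ F₃ G₃ E₃).D0 :=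
    E0_solution _ h3
  have he₁₂ := E0_solution _ (couple_solution _ _ Z₁ Z₂ Z₃ he₁ he₂)
  have he₂₃ := E0_solution _ (couple_solution _ _ Z₂ Z₃ Z₄ he₂ he₃)
  have hecc := E0_solution _ (couple_solution _ _
    (-(Z₂ * ((QData.mk A₁ B₁ C₁ D₁ F₁ G₁ E₁).D0 * mp (QData.mk A₁ B₁ C₁ D₁ F₁ G₁ E₁).D0)))
    (-(Z₃ * ((QData.mk A₂ B₂ C₂ D₂ F₂ G₂ E₂).D0 * mp (QData.mk A₂ B₂ C₂ D₂ F₂ G₂ E₂).D0)))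
    (-(Z₄ * ((QData.mk A₃ B₃ C₃ D₃ F₃ G₃ E₃).D0 * mp (QData.mk A₃ B₃ C₃ D₃ F₃ G₃ E₃).D0)))
    he₁₂ he₂₃)
  exact ⟨consistent_of_pair _ _ _ he₁, consistent_of_pair _ _ _ he₂,
    consistent_of_pair _ _ _ he₃, consistent_of_pair _ _ _ he₁₂,
    consistent_of_pair _ _ _ he₂₃, consistent_of_pair _ _ _ hecc⟩
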